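/- Let q = p^e > 2 be a prime power, r ≥ 1 a divisor of 2e, λ ∈ F* with λ^{p^{tr}} = λ^q for some 0 ≤ t < 2e/r, and k = k_{r,λ}(q). A flag (⟨u₂⟩, L₂) ∈ V(q) is adjacent to (∞, L) in Γ_{r,λ}(q) if and only if there exist an integer 0 ≤ i < k, a ∈ F \ {1}, b ∈ F and c ∈ F* with b + b^q = a^{q+1}, such that (i) u₂ is a scalar multiple of (ac/(1−a), bc/(1−a), c/(1−a)), and (ii) L₂ is the set of absolute points ⟨x,y,z⟩ satisfying (λ^{q p^{ir}} + a^q c)x − cy − (λ^{q p^{ir}} a + b^q c)z = 0. -/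

import Mathlib

namespace UnitaryGraphPaper

variable (F : Type) [Field F]

/-- The Hermitian form β((x₁,y₁,z₁),(x₂,y₂,z₂)) = −x₁x₂^q + y₁z₂^q + z₁y₂^q. -/
def beta (q : ℕ) (u v : F × F × F) : F :=
  -(u.1 * v.1 ^ q) + u.2.1 * v.2.2 ^ q + u.2.2 * v.2.1 ^ q

/-- A vector is isotropic if β(u,u) = 0. -/
def Isotropic (q : ℕ) (u : F × F × F) : Prop := beta F q u u = 0

/-- Absolute points: 1-dimensional subspaces spanned by nonzero isotropic vectors. -/
def IsAbsolutePoint (q : ℕ) (P : Submodule F (F × F × F)) : Prop :=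
  ∃ u : F × F × F, u ≠ 0 ∧ Isotropic F q u ∧ P = Submodule.span F {u}

/-- Lines of the Hermitian unital: sets of absolute points contained in a 2-dimensional
subspace spanned by two linearly independent isotropic vectors. -/
def IsUnitalLine (q : ℕ) (l : Set (Submodule F (F × F × F))) : Prop :=
  ∃ u v : F × F × F, Isotropic F q u ∧ Isotropic F q v ∧ LinearIndependent F ![u, v] ∧
    l = {P | IsAbsolutePoint F q P ∧ P ≤ Submodule.span F ({u, v} : Set (F × F × F))}

/-- Flags of the Hermitian unital: incident point-line pairs. -/
def Flag (q : ℕ) : Type :=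
  {Pl : Submodule F (F × F × F) × Set (Submodule F (F × F × F)) //
    IsAbsolutePoint F q Pl.1 ∧ IsUnitalLine F q Pl.2 ∧ Pl.1 ∈ Pl.2}

/-- The set of absolute points ⟨x,y,z⟩ for which the determinant of the 3×3 matrix with
columns (x,y,z), u, w vanishes. -/
def detLine (q : ℕ) (u w : F × F × F) : Set (Submodule F (F × F × F)) :=
  {P | ∃ v : F × F × F, v ≠ 0 ∧ Isotropic F q v ∧ P = Submodule.span F {v} ∧
    (!![v.1, u.1, w.1; v.2.1, u.2.1, w.2.1; v.2.2, u.2.2, w.2.2] : Matrix (Fin 3) (Fin 3) F).det = 0}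

/-- The defining adjacency condition of the unitary graph Γ_{r,λ}(q), q = p^e. -/
def AdjCond (p q e r : ℕ) (lam : F) (v₁ v₂ : Flag F q) : Prop :=
  ∃ i : ℕ, i < 2 * e / r ∧ ∃ u₁ u₂ u₀ : F × F × F,
    u₁ ≠ 0 ∧ Isotropic F q u₁ ∧ v₁.1.1 = Submodule.span F {u₁} ∧
    u₂ ≠ 0 ∧ Isotropic F q u₂ ∧ v₂.1.1 = Submodule.span F {u₂} ∧
    ¬ Isotropic F q u₀ ∧ beta F q u₀ u₁ = 0 ∧ beta F q u₀ u₂ = 0 ∧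
    v₁.1.2 = detLine F q u₁ (u₀ + u₂) ∧
    v₂.1.2 = detLine F q u₂ (u₀ + lam ^ (q * p ^ (i * r)) • u₁)

/-- The unitary graph Γ_{r,λ}(q). -/
def unitaryGraph (p q e r : ℕ) (lam : F) : SimpleGraph (Flag F q) :=
  SimpleGraph.fromRel (AdjCond F p q e r lam)

/-- The absolute point ∞ = ⟨0,1,0⟩. -/
def ptInfty : Submodule F (F × F × F) := Submodule.span F {((0 : F), 1, 0)}

/-- The absolute point 0 = ⟨0,0,1⟩. -/
def ptZero : Submodule F (F × F × F) := Submodule.span F {((0 : F), 0, 1)}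

/-- The line L*: absolute points ⟨x,y,z⟩ with x = 0. -/
def lineLstar (q : ℕ) : Set (Submodule F (F × F × F)) :=
  {P | ∃ v : F × F × F, v ≠ 0 ∧ Isotropic F q v ∧ P = Submodule.span F {v} ∧ v.1 = 0}

/-- The line L: absolute points ⟨x,y,z⟩ with x = z. -/
def lineL (q : ℕ) : Set (Submodule F (F × F × F)) :=
  {P | ∃ v : F × F × F, v ≠ 0 ∧ Isotropic F q v ∧ P = Submodule.span F {v} ∧ v.1 = v.2.2}

/-- The line N(η): absolute points ⟨x,y,z⟩ with y = ηx. -/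
def lineN (q : ℕ) (eta : F) : Set (Submodule F (F × F × F)) :=
  {P | ∃ v : F × F × F, v ≠ 0 ∧ Isotropic F q v ∧ P = Submodule.span F {v} ∧ v.2.1 = eta * v.1}

/-- The line given by the homogenous equation A x + B y + C z = 0 (as a set of absolute
points). -/
def eqnLine (q : ℕ) (A B C : F) : Set (Submodule F (F × F × F)) :=
  {P | ∃ v : F × F × F, v ≠ 0 ∧ Isotropic F q v ∧ P = Submodule.span F {v} ∧
    A * v.1 + B * v.2.1 + C * v.2.2 = 0}

/-- Common neighbours of two vertices in a graph. -/
def commonNbrs {V : Type} (G : SimpleGraph V) (a b : V) : Set V :=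
  {c | G.Adj a c ∧ G.Adj b c}


section Helpers

variable {F}

private lemma det3 [Field F] (v u w : F × F × F) :
    (!![v.1, u.1, w.1; v.2.1, u.2.1, w.2.1; v.2.2, u.2.2, w.2.2] : Matrix (Fin 3) (Fin 3) F).det =
    v.1 * u.2.1 * w.2.2 - v.1 * w.2.1 * u.2.2 - u.1 * v.2.1 * w.2.2 + u.1 * w.2.1 * v.2.2 +
      w.1 * v.2.1 * u.2.2 - w.1 * u.2.1 * v.2.2 := by
  simp [Matrix.det_fin_three]

private lemma exists_smul_of_span_eq [Field F] {u v : F × F × F} (hv : v ≠ 0)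
    (h : Submodule.span F {u} = Submodule.span F {v}) : ∃ t : F, t ≠ 0 ∧ v = t • u := by
  have hm : v ∈ Submodule.span F ({u} : Set (F × F × F)) := by
    rw [h]; exact Submodule.mem_span_singleton_self v
  obtain ⟨t, ht⟩ := Submodule.mem_span_singleton.mp hm
  refine ⟨t, ?_, ht.symm⟩
  rintro rfl
  rw [zero_smul] at ht
  exact hv ht.symm

private lemma char_eq [Field F] [Fintype F] {p e : ℕ} (hp : p.Prime) (he : 0 < e)
    (hF : Fintype.card F = (p ^ e) ^ 2) : CharP F p := by
  have h1 : CharP F (ringChar F) := ringChar.charP F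
  have h2 : (ringChar F).Prime := CharP.char_is_prime F (ringChar F)
  obtain ⟨n, -, hcard⟩ := FiniteField.card F (ringChar F)
  have h3 : (p ^ e) ^ 2 = ringChar F ^ (n : ℕ) := by rw [← hF, hcard]
  have h4 : p ∣ ringChar F ^ (n : ℕ) := by
    rw [← h3, ← pow_mul]
    exact dvd_pow_self p (by positivity)
  have h5 : p = ringChar F := by
    rw [← Nat.prime_dvd_prime_iff_eq hp h2]
    exact hp.dvd_of_dvd_pow h4
  rw [h5]; exact h1

private lemma exists_trace_one [Field F] [Fintype F] {p e q : ℕ} (hp : p.Prime)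
    (he : 0 < e) (hq : q = p ^ e) (hq2 : 2 < q) (hF : Fintype.card F = q ^ 2) :
    ∃ y : F, y + y ^ q = 1 := by
  haveI : Fact p.Prime := ⟨hp⟩
  haveI : CharP F p := char_eq hp he (by rw [← hq]; exact hF)
  have hq0 : q ≠ 0 := by omega
  have hqq : ∀ x : F, (x ^ q) ^ q = x := by
    intro x
    rw [← pow_mul, ← pow_two]
    have := FiniteField.pow_card x
    rwa [hF] at this
  have hadd : ∀ x y : F, (x + y) ^ q = x ^ q + y ^ q := by
    intro x y; rw [hq]; exact add_pow_char_pow x y p e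
  by_cases hex : ∃ z : F, z + z ^ q ≠ 0
  · obtain ⟨z, hz⟩ := hex
    have hsq : (z + z ^ q) ^ q = z + z ^ q := by
      rw [hadd, hqq]; ring
    refine ⟨z * (z + z ^ q)⁻¹, ?_⟩
    rw [mul_pow, inv_pow, hsq]
    rw [← add_mul, mul_inv_cancel₀ hz]
  · push_neg at hex
    exfalso
    have h2 : (1 : F) + 1 = 0 := by have := hex 1; rwa [one_pow] at this
    have hfix : ∀ z : F, z ^ q = z := by
      intro z
      have h1 := hex z
      linear_combination h1 - z * h2
    set f : Polynomial F := Polynomial.X ^ q - Polynomial.X with hf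
    have hf0 : f ≠ 0 := by
      intro h0
      have : f.coeff q = 0 := by rw [h0]; simp
      rw [hf, Polynomial.coeff_sub, Polynomial.coeff_X_pow, Polynomial.coeff_X] at this
      simp [show ¬(1:ℕ) = q by omega] at this
    have hdeg : f.natDegree ≤ q := by
      refine le_trans (Polynomial.natDegree_sub_le _ _) ?_
      simp only [Polynomial.natDegree_X_pow, Polynomial.natDegree_X]
      omega
    classical
    have hsub : (Finset.univ : Finset F) ⊆ f.roots.toFinset := by
      intro z _
      rw [Multiset.mem_toFinset, Polynomial.mem_roots']
      refine ⟨hf0, ?_⟩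
      rw [hf]
      simp [Polynomial.IsRoot, hfix z]
    have hcard : Fintype.card F ≤ q := by
      calc Fintype.card F = (Finset.univ : Finset F).card := rfl
        _ ≤ f.roots.toFinset.card := Finset.card_le_card hsub
        _ ≤ Multiset.card f.roots := Multiset.toFinset_card_le _
        _ ≤ f.natDegree := Polynomial.card_roots' f
        _ ≤ q := hdeg
    rw [hF] at hcard
    nlinarith

private lemma factor_iff_eq [Field F] {K x u v : F} (hK : K ≠ 0) (h : x = K * (u - v)) :
    x = 0 ↔ u = v := by
  rw [h, mul_eq_zero, sub_eq_zero]
  simp [hK]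

private lemma factor_iff_zero [Field F] {K x y : F} (hK : K ≠ 0) (h : x = K * y) :
    x = 0 ↔ y = 0 := by
  rw [h, mul_eq_zero]
  simp [hK]

private lemma zero_iff_aux2 [Field F] {a z x y : F} (ha : a ≠ 0) (hz : z ≠ 0)
    (h : a * x = z * y) : x = 0 ↔ y = 0 := by
  constructor
  · intro h0; rw [h0, mul_zero] at h
    exact (mul_eq_zero.mp h.symm).resolve_left hz
  · intro h0; rw [h0, mul_zero] at h
    exact (mul_eq_zero.mp h).resolve_left ha

private lemma detLine_eq_eqnLine [Field F] (q : ℕ) (u w : F × F × F) (A B C : F)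
    (h : ∀ v : F × F × F,
      (v.1 * u.2.1 * w.2.2 - v.1 * w.2.1 * u.2.2 - u.1 * v.2.1 * w.2.2 + u.1 * w.2.1 * v.2.2 +
        w.1 * v.2.1 * u.2.2 - w.1 * u.2.1 * v.2.2 = 0) ↔ (A * v.1 + B * v.2.1 + C * v.2.2 = 0)) :
    detLine F q u w = eqnLine F q A B C := by
  unfold detLine eqnLine
  ext P
  refine exists_congr fun v => and_congr_right fun _ => and_congr_right fun _ =>
    and_congr_right fun _ => ?_
  rw [det3 v u w]
  exact h v

private lemma detLine_eq_lineL [Field F] (q : ℕ) (u w : F × F × F)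
    (h : ∀ v : F × F × F,
      (v.1 * u.2.1 * w.2.2 - v.1 * w.2.1 * u.2.2 - u.1 * v.2.1 * w.2.2 + u.1 * w.2.1 * v.2.2 +
        w.1 * v.2.1 * u.2.2 - w.1 * u.2.1 * v.2.2 = 0) ↔ (v.1 = v.2.2)) :
    detLine F q u w = lineL F q := by
  unfold detLine lineL
  ext P
  refine exists_congr fun v => and_congr_right fun _ => and_congr_right fun _ =>
    and_congr_right fun _ => ?_
  rw [det3 v u w]
  exact h v

/-- Extracting information from `lineL = detLine (0,s,0) W`. -/
private lemma key_extract [Field F] {q : ℕ} (hq0 : q ≠ 0) {s : F} (hs : s ≠ 0)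
    {W : F × F × F} {y : F} (hy : y + y ^ q = 1)
    (heq : lineL F q = detLine F q (0, s, 0) W) : W.1 = W.2.2 ∧ W.1 ≠ 0 := by
  have hmem : Submodule.span F {((1:F), y, 1)} ∈ lineL F q := by
    refine ⟨((1:F), y, 1), ?_, ?_, rfl, rfl⟩
    · intro h; exact one_ne_zero (congrArg Prod.fst h)
    · show -((1:F) * 1 ^ q) + y * 1 ^ q + 1 * y ^ q = 0
      simp only [one_pow, one_mul, mul_one]
      linear_combination hy
  rw [heq] at hmem
  obtain ⟨v, hv0, -, hsp, hdet⟩ := hmem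
  obtain ⟨t, ht0, htv⟩ := exists_smul_of_span_eq hv0 hsp
  have hv1 : v.1 = t := by rw [htv]; simp
  have hv2 : v.2.1 = t * y := by rw [htv]; simp
  have hv3 : v.2.2 = t := by rw [htv]; simp
  rw [det3] at hdet
  simp only [hv1, hv2, hv3] at hdet
  have hW : W.1 = W.2.2 := by
    have h1 : (s * t) * (W.2.2 - W.1) = 0 := by linear_combination hdet
    have h2 := (mul_eq_zero.mp h1).resolve_left (mul_ne_zero hs ht0)
    linear_combination -h2
  refine ⟨hW, ?_⟩
  intro hW0
  have hmem2 : Submodule.span F {((0:F), 0, 1)} ∈ detLine F q ((0:F), s, 0) W := by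
    refine ⟨((0:F), 0, 1), ?_, ?_, rfl, ?_⟩
    · intro h; exact one_ne_zero (congrArg (fun x => x.2.2) h)
    · show -((0:F) * 0 ^ q) + 0 * 1 ^ q + 1 * 0 ^ q = 0
      simp [zero_pow hq0]
    · rw [det3]
      simp [hW0]
  rw [← heq] at hmem2
  obtain ⟨v', hv0', -, hsp', h13⟩ := hmem2
  obtain ⟨t', ht0', htv'⟩ := exists_smul_of_span_eq hv0' hsp'
  apply ht0'
  have h1 : v'.1 = 0 := by rw [htv']; simp
  have h3 : v'.2.2 = t' := by rw [htv']; simp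
  rw [h1, h3] at h13
  exact h13.symm

end Helpers

theorem stmt7 (F : Type) [Field F] [Fintype F] (p q e r : ℕ)
    (hp : p.Prime) (he : 0 < e) (hq : q = p ^ e) (hq2 : 2 < q)
    (hr : 0 < r) (hre : r ∣ 2 * e) (hF : Fintype.card F = q ^ 2)
    (lam : F) (hlam : lam ≠ 0)
    (hlamq : ∃ t : ℕ, t < 2 * e / r ∧ lam ^ p ^ (t * r) = lam ^ q)
    (k : ℕ) (hk : 0 < k) (hkfix : lam ^ p ^ (k * r) = lam)
    (hkmin : ∀ j : ℕ, 0 < j → lam ^ p ^ (j * r) = lam → k ≤ j)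
    (vL w : Flag F q) (hvL : vL.1 = (ptInfty F, lineL F q)) :
    (unitaryGraph F p q e r lam).Adj vL w ↔
      ∃ i < k, ∃ a b c : F, a ≠ 1 ∧ c ≠ 0 ∧ b + b ^ q = a ^ (q + 1) ∧
        w.1.1 = Submodule.span F {(a * c / (1 - a), b * c / (1 - a), c / (1 - a))} ∧
        w.1.2 = eqnLine F q (lam ^ (q * p ^ (i * r)) + a ^ q * c) (-c)
          (-(lam ^ (q * p ^ (i * r)) * a + b ^ q * c)) := by
  have hq0 : q ≠ 0 := by omega
  have hvpt : vL.1.1 = ptInfty F := by rw [hvL]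
  have hvln : vL.1.2 = lineL F q := by rw [hvL]
  have hpinf : ptInfty F = Submodule.span F {((0:F), 1, 0)} := rfl
  have hkle : k ≤ 2 * e / r := by
    refine hkmin _ (Nat.div_pos (Nat.le_of_dvd (by omega) hre) hr) ?_
    rw [Nat.div_mul_cancel hre]
    have h1 : p ^ (2 * e) = q * q := by rw [hq, ← pow_add]; congr 1; ring
    rw [h1, pow_mul]
    have := FiniteField.pow_card lam
    rwa [hF, pow_two, pow_mul] at this
  obtain ⟨y, hy⟩ := exists_trace_one hp he hq hq2 hF
  constructor
  · -- forward direction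
    intro hadj
    have hadj' : vL ≠ w ∧ (AdjCond F p q e r lam vL w ∨ AdjCond F p q e r lam w vL) := by
      rw [← SimpleGraph.fromRel_adj]; exact hadj
    obtain ⟨hne, hcase⟩ := hadj'
    rcases hcase with h | h
    · -- case A : AdjCond vL w
      obtain ⟨i, hi, u₁, u₂, u₀, hu₁0, hu₁iso, hvLpt, hu₂0, hu₂iso, hwpt, hu₀non,
        hβ01, hβ02, hL1, hL2⟩ := h
      set lam' := lam ^ (q * p ^ (i * r)) with hlam'def
      have hlam'0 : lam' ≠ 0 := pow_ne_zero _ hlam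
      obtain ⟨s, hs0, hu₁eq⟩ := exists_smul_of_span_eq hu₁0 (by rw [← hpinf, ← hvpt]; exact hvLpt)
      have hu₁c : u₁ = ((0:F), s, 0) := by
        rw [hu₁eq]
        show (s * 0, s * 1, s * 0) = _
        rw [mul_zero, mul_one]
      rw [hu₁c] at hL1 hL2 hβ01
      have h03 : u₀.2.2 = 0 := by
        have h' : -(u₀.1 * 0 ^ q) + u₀.2.1 * 0 ^ q + u₀.2.2 * s ^ q = 0 := hβ01
        rw [zero_pow hq0, mul_zero, mul_zero, neg_zero, zero_add, zero_add] at h'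
        exact (mul_eq_zero.mp h').resolve_right (pow_ne_zero _ hs0)
      have hα0 : u₀.1 ≠ 0 := by
        intro h0
        apply hu₀non
        show -(u₀.1 * u₀.1 ^ q) + u₀.2.1 * u₀.2.2 ^ q + u₀.2.2 * u₀.2.1 ^ q = 0
        rw [h0, h03, zero_pow hq0]
        ring
      have hkey := key_extract hq0 hs0 hy (by rw [← hvln]; exact hL1)
      have hA : u₀.1 + u₂.1 = u₂.2.2 := by
        have h1' : u₀.1 + u₂.1 = u₀.2.2 + u₂.2.2 := hkey.1
        rw [h03, zero_add] at h1'
        exact h1'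
      have hz3 : u₂.2.2 ≠ 0 := by
        intro h0
        apply hkey.2
        show u₀.1 + u₂.1 = 0
        rw [hA]; exact h0
      set z := u₂.2.2 with hzdef
      set a := u₂.1 / z with hadef
      set b := u₂.2.1 / z with hbdef
      have ha : a * z = u₂.1 := by rw [hadef]; exact div_mul_cancel₀ _ hz3
      have hbz : b * z = u₂.2.1 := by rw [hbdef]; exact div_mul_cancel₀ _ hz3
      have ha1 : a ≠ 1 := by
        intro h1
        rw [h1, one_mul] at ha
        exact hα0 (by linear_combination hA + ha)
      have haq : a ^ q * z ^ q = u₂.1 ^ q := by rw [← mul_pow, ha]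
      have hbq : b ^ q * z ^ q = u₂.2.1 ^ q := by rw [← mul_pow, hbz]
      have hzq : z ^ q ≠ 0 := pow_ne_zero _ hz3
      have hbb : b + b ^ q = a ^ q * a := by
        have h' : -(u₂.1 * u₂.1 ^ q) + u₂.2.1 * z ^ q + z * u₂.2.1 ^ q = 0 := hu₂iso
        have h2 : (z * z ^ q) * (b + b ^ q - a ^ q * a) = 0 := by
          linear_combination h' + z ^ q * hbz + z * hbq - (a * z) * haq - u₂.1 ^ q * ha
        have h3 := (mul_eq_zero.mp h2).resolve_left (mul_ne_zero hz3 hzq)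
        linear_combination h3
      have hβ₀ : u₀.2.1 = u₀.1 * a ^ q := by
        have h' : -(u₀.1 * u₂.1 ^ q) + u₀.2.1 * z ^ q + u₀.2.2 * u₂.2.1 ^ q = 0 := hβ02
        rw [h03, zero_mul, add_zero] at h'
        have h2 : (u₀.2.1 - u₀.1 * a ^ q) * z ^ q = 0 := by
          linear_combination h' - u₀.1 * haq
        have h3 := (mul_eq_zero.mp h2).resolve_right hzq
        linear_combination h3
      have hu₀c : u₀ = (u₀.1, u₀.1 * a ^ q, (0:F)) := by
        rw [← hβ₀, ← h03]
      have hu₂c : u₂ = (a * z, b * z, z) := by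
        rw [ha, hbz]
      rw [hu₀c, hu₂c] at hL2
      have h1a : (1:F) - a ≠ 0 := sub_ne_zero_of_ne (Ne.symm ha1)
      set τ := lam ^ q / (lam' * s) with hτdef
      have hμ0 : lam' * s ≠ 0 := mul_ne_zero hlam'0 hs0
      have hτ0 : τ ≠ 0 := div_ne_zero (pow_ne_zero _ hlam) hμ0
      have hτ : τ * (lam' * s) = lam ^ q := div_mul_cancel₀ _ hμ0
      clear_value z a b τ lam'
      have hzz : u₀.1 = z * (1 - a) := by linear_combination hA + ha
      refine ⟨0, hk, a, b, τ * u₀.1, ha1, mul_ne_zero hτ0 hα0, ?_, ?_, ?_⟩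
      · rw [pow_succ]; exact hbb
      · -- the point
        rw [hwpt, hu₂c]
        have hvec : ((a * (τ * u₀.1) / (1 - a), b * (τ * u₀.1) / (1 - a),
            (τ * u₀.1) / (1 - a)) : F × F × F) = τ • ((a * z, b * z, z) : F × F × F) := by
          show _ = (τ * (a * z), τ * (b * z), τ * z)
          rw [Prod.mk.injEq, Prod.mk.injEq]
          refine ⟨?_, ?_, ?_⟩ <;> (rw [hzz]; field_simp)
        rw [hvec, Submodule.span_singleton_smul_eq (isUnit_iff_ne_zero.mpr hτ0)]
      · -- the line
        rw [hL2]
        simp only [Nat.zero_mul, pow_zero, mul_one]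
        rw [show ((u₀.1, u₀.1 * a ^ q, (0:F)) : F × F × F) + lam' • (((0:F), s, 0) : F × F × F)
            = ((u₀.1 + lam' * 0, u₀.1 * a ^ q + lam' * s, 0 + lam' * 0) : F × F × F) from rfl]
        apply detLine_eq_eqnLine
        intro v
        refine zero_iff_aux2 (a := τ) (z := -z) hτ0 (neg_ne_zero.mpr hz3) ?_
        rw [← hτ]
        linear_combination (-(τ * z * u₀.1 * v.2.2)) * hbb
    · -- case B : AdjCond w vL
      obtain ⟨i, hi, u₁, u₂, u₀, hu₁0, hu₁iso, hwpt, hu₂0, hu₂iso, hvLpt, hu₀non,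
        hβ01, hβ02, hL1, hL2⟩ := h
      set lam' := lam ^ (q * p ^ (i * r)) with hlam'def
      have hlam'0 : lam' ≠ 0 := pow_ne_zero _ hlam
      obtain ⟨s, hs0, hu₂eq⟩ := exists_smul_of_span_eq hu₂0 (by rw [← hpinf, ← hvpt]; exact hvLpt)
      have hu₂c : u₂ = ((0:F), s, 0) := by
        rw [hu₂eq]
        show (s * 0, s * 1, s * 0) = _
        rw [mul_zero, mul_one]
      rw [hu₂c] at hL1 hL2 hβ02
      have h03 : u₀.2.2 = 0 := by
        have h' : -(u₀.1 * 0 ^ q) + u₀.2.1 * 0 ^ q + u₀.2.2 * s ^ q = 0 := hβ02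
        rw [zero_pow hq0, mul_zero, mul_zero, neg_zero, zero_add, zero_add] at h'
        exact (mul_eq_zero.mp h').resolve_right (pow_ne_zero _ hs0)
      have hγ0 : u₀.1 ≠ 0 := by
        intro h0
        apply hu₀non
        show -(u₀.1 * u₀.1 ^ q) + u₀.2.1 * u₀.2.2 ^ q + u₀.2.2 * u₀.2.1 ^ q = 0
        rw [h0, h03, zero_pow hq0]
        ring
      have hkey := key_extract hq0 hs0 hy (by rw [← hvln]; exact hL2)
      have hA : u₀.1 + lam' * u₁.1 = lam' * u₁.2.2 := by
        have h1' : u₀.1 + lam' * u₁.1 = u₀.2.2 + lam' * u₁.2.2 := hkey.1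
        rw [h03, zero_add] at h1'
        exact h1'
      have hz3 : u₁.2.2 ≠ 0 := by
        intro h0
        apply hkey.2
        show u₀.1 + lam' * u₁.1 = 0
        rw [hA, h0, mul_zero]
      set z := u₁.2.2 with hzdef
      set a := u₁.1 / z with hadef
      set b := u₁.2.1 / z with hbdef
      have ha : a * z = u₁.1 := by rw [hadef]; exact div_mul_cancel₀ _ hz3
      have hbz : b * z = u₁.2.1 := by rw [hbdef]; exact div_mul_cancel₀ _ hz3
      have ha1 : a ≠ 1 := by
        intro h1
        rw [h1, one_mul] at ha
        exact hγ0 (by linear_combination hA + lam' * ha)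
      have haq : a ^ q * z ^ q = u₁.1 ^ q := by rw [← mul_pow, ha]
      have hbq : b ^ q * z ^ q = u₁.2.1 ^ q := by rw [← mul_pow, hbz]
      have hzq : z ^ q ≠ 0 := pow_ne_zero _ hz3
      have hbb : b + b ^ q = a ^ q * a := by
        have h' : -(u₁.1 * u₁.1 ^ q) + u₁.2.1 * z ^ q + z * u₁.2.1 ^ q = 0 := hu₁iso
        have h2 : (z * z ^ q) * (b + b ^ q - a ^ q * a) = 0 := by
          linear_combination h' + z ^ q * hbz + z * hbq - (a * z) * haq - u₁.1 ^ q * ha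
        have h3 := (mul_eq_zero.mp h2).resolve_left (mul_ne_zero hz3 hzq)
        linear_combination h3
      have hβ₀ : u₀.2.1 = u₀.1 * a ^ q := by
        have h' : -(u₀.1 * u₁.1 ^ q) + u₀.2.1 * z ^ q + u₀.2.2 * u₁.2.1 ^ q = 0 := hβ01
        rw [h03, zero_mul, add_zero] at h'
        have h2 : (u₀.2.1 - u₀.1 * a ^ q) * z ^ q = 0 := by
          linear_combination h' - u₀.1 * haq
        have h3 := (mul_eq_zero.mp h2).resolve_right hzq
        linear_combination h3
      have hu₀c : u₀ = (u₀.1, u₀.1 * a ^ q, (0:F)) := by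
        rw [← hβ₀, ← h03]
      have hu₁c : u₁ = (a * z, b * z, z) := by
        rw [ha, hbz]
      rw [hu₀c, hu₁c] at hL1
      have h1a : (1:F) - a ≠ 0 := sub_ne_zero_of_ne (Ne.symm ha1)
      set τ := lam ^ q / s with hτdef
      have hτ0 : τ ≠ 0 := div_ne_zero (pow_ne_zero _ hlam) hs0
      have hτ : τ * s = lam ^ q := div_mul_cancel₀ _ hs0
      clear_value z a b τ lam'
      have hzz : u₀.1 = lam' * z * (1 - a) := by linear_combination hA + lam' * ha
      refine ⟨0, hk, a, b, τ * u₀.1, ha1, mul_ne_zero hτ0 hγ0, ?_, ?_, ?_⟩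
      · rw [pow_succ]; exact hbb
      · -- the point
        rw [hwpt, hu₁c]
        have hvec : ((a * (τ * u₀.1) / (1 - a), b * (τ * u₀.1) / (1 - a),
            (τ * u₀.1) / (1 - a)) : F × F × F)
            = (τ * lam') • ((a * z, b * z, z) : F × F × F) := by
          show _ = (τ * lam' * (a * z), τ * lam' * (b * z), τ * lam' * z)
          rw [Prod.mk.injEq, Prod.mk.injEq]
          refine ⟨?_, ?_, ?_⟩ <;> (rw [hzz]; field_simp)
        rw [hvec, Submodule.span_singleton_smul_eq
          (isUnit_iff_ne_zero.mpr (mul_ne_zero hτ0 hlam'0))]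
      · -- the line
        rw [hL1]
        simp only [Nat.zero_mul, pow_zero, mul_one]
        rw [show ((u₀.1, u₀.1 * a ^ q, (0:F)) : F × F × F) + (((0:F), s, 0) : F × F × F)
            = ((u₀.1 + 0, u₀.1 * a ^ q + s, (0:F) + 0) : F × F × F) from rfl]
        apply detLine_eq_eqnLine
        intro v
        refine zero_iff_aux2 (a := τ) (z := -z) hτ0 (neg_ne_zero.mpr hz3) ?_
        rw [← hτ]
        linear_combination (-(τ * z * u₀.1 * v.2.2)) * hbb
  · -- backward direction
    rintro ⟨i, hik, a, b, c, ha1, hc0, hb, hpt, hline⟩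
    have h1a : (1:F) - a ≠ 0 := sub_ne_zero_of_ne (Ne.symm ha1)
    set lam' := lam ^ (q * p ^ (i * r)) with hlam'def
    have hlam'0 : lam' ≠ 0 := pow_ne_zero _ hlam
    have hb' : b + b ^ q = a ^ q * a := by rw [← pow_succ]; exact hb
    show (SimpleGraph.fromRel (AdjCond F p q e r lam)).Adj vL w
    rw [SimpleGraph.fromRel_adj]
    constructor
    · -- vL ≠ w
      intro hEq
      have hspan : Submodule.span F {((0:F), 1, 0)} =
          Submodule.span F {(a * c / (1 - a), b * c / (1 - a), c / (1 - a))} := by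
        rw [← hpinf, ← hvpt, hEq, hpt]
      have hne0 : (a * c / (1 - a), b * c / (1 - a), c / (1 - a)) ≠ (0 : F × F × F) := by
        intro h
        exact div_ne_zero hc0 h1a (congrArg (fun x => x.2.2) h)
      obtain ⟨t, ht0, htv⟩ := exists_smul_of_span_eq hne0 hspan
      have h22 := congrArg (fun x => x.2.2) htv
      simp only at h22
      have : c / (1 - a) = t * 0 := h22
      rw [mul_zero] at this
      exact div_ne_zero hc0 h1a this
    · left
      refine ⟨i, lt_of_lt_of_le hik hkle, ((0:F), 1 - a, 0), (a * c, b * c, c),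
        (c * (1 - a), c * (1 - a) * a ^ q, 0), ?_, ?_, ?_, ?_, ?_, ?_, ?_, ?_, ?_, ?_, ?_⟩
      · -- u₁ ≠ 0
        intro h
        exact h1a (congrArg (fun x => x.2.1) h)
      · -- Isotropic u₁
        show -((0:F) * 0 ^ q) + (1 - a) * 0 ^ q + 0 * (1 - a) ^ q = 0
        simp [zero_pow hq0]
      · -- vL.1.1 = span u₁
        rw [hvpt, hpinf]
        have : (((0:F), 1 - a, 0) : F × F × F) = (1 - a) • ((((0:F), (1:F), (0:F))) : F × F × F) := by
          show _ = ((1 - a) * 0, (1 - a) * 1, (1 - a) * 0)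
          rw [mul_zero, mul_one]
        rw [this, Submodule.span_singleton_smul_eq (isUnit_iff_ne_zero.mpr h1a)]
      · -- u₂ ≠ 0
        intro h
        exact hc0 (congrArg (fun x => x.2.2) h)
      · -- Isotropic u₂
        show -(a * c * (a * c) ^ q) + b * c * c ^ q + c * (b * c) ^ q = 0
        rw [mul_pow, mul_pow]
        linear_combination (c * c ^ q) * hb'
      · -- w.1.1 = span u₂
        rw [hpt]
        have : ((a * c / (1 - a), b * c / (1 - a), c / (1 - a)) : F × F × F) =
            ((1 - a)⁻¹ : F) • ((a * c, b * c, c) : F × F × F) := by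
          show _ = ((1 - a)⁻¹ * (a * c), (1 - a)⁻¹ * (b * c), (1 - a)⁻¹ * c)
          rw [← div_eq_inv_mul, ← div_eq_inv_mul, ← div_eq_inv_mul]
        rw [this, Submodule.span_singleton_smul_eq
          (isUnit_iff_ne_zero.mpr (inv_ne_zero h1a))]
      · -- u₀ not isotropic
        show ¬(-(c * (1 - a) * (c * (1 - a)) ^ q) + c * (1 - a) * a ^ q * 0 ^ q
            + 0 * (c * (1 - a) * a ^ q) ^ q = 0)
        rw [zero_pow hq0, mul_zero, zero_mul, add_zero, add_zero, neg_eq_zero]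
        exact mul_ne_zero (mul_ne_zero hc0 h1a) (pow_ne_zero q (mul_ne_zero hc0 h1a))
      · -- beta u₀ u₁ = 0
        show -(c * (1 - a) * 0 ^ q) + c * (1 - a) * a ^ q * 0 ^ q + 0 * (1 - a) ^ q = 0
        simp [zero_pow hq0]
      · -- beta u₀ u₂ = 0
        show -(c * (1 - a) * (a * c) ^ q) + c * (1 - a) * a ^ q * c ^ q + 0 * (b * c) ^ q = 0
        rw [mul_pow]
        ring
      · -- the line through vL
        rw [hvln]
        symm
        rw [show ((c * (1 - a), c * (1 - a) * a ^ q, 0) : F × F × F) + (a * c, b * c, c) =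
          ((c * (1 - a) + a * c, c * (1 - a) * a ^ q + b * c, 0 + c) : F × F × F) from rfl]
        apply detLine_eq_lineL
        intro v
        refine factor_iff_eq (K := (1 - a) * c) (mul_ne_zero h1a hc0) ?_
        ring
      · -- the line through w
        rw [hline]
        symm
        rw [show ((c * (1 - a), c * (1 - a) * a ^ q, 0) : F × F × F) +
            lam' • (((0:F), 1 - a, 0) : F × F × F) =
          ((c * (1 - a) + lam' * 0, c * (1 - a) * a ^ q + lam' * (1 - a), 0 + lam' * 0) :
            F × F × F) from rfl]
        apply detLine_eq_eqnLine
        intro v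
        refine factor_iff_zero (K := -((1 - a) * c)) (neg_ne_zero.mpr (mul_ne_zero h1a hc0)) ?_
        linear_combination (-((1 - a) * c ^ 2 * v.2.2)) * hb'


end UnitaryGraphPaper
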